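/- Let G^X = (V, E^X, s) be an extraction order and let e = (k, l) be an edge not lying on either path of a given confluence C = P1 ⊔ P2 from i to j, but such that e lies on some directed path from i to j. Then there exists a confluence with target j containing e. -/

import Mathlib

/-- The list of consecutive edges traversed by a path given as a list of vertices. -/
def pathEdges {V : Type*} (p : List V) : List (V × V) := p.zip p.tail

/-- A (simple) directed path from `a` to `b` in the edge set `E`, given as the
nonempty list of visited vertices. -/
def IsPath {V : Type*} (E : Finset (V × V)) (a b : V) (p : List V) : Prop :=
  p ≠ [] ∧ p.head? = some a ∧ p.getLast? = some b ∧ p.Nodup ∧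
    ∀ e ∈ pathEdges p, e ∈ E

/-- An extraction order: a rooted DAG in which every vertex is reachable from the root. -/
structure ExtractionOrder (V : Type*) where
  E : Finset (V × V)
  root : V
  reach : ∀ v : V, ∃ p : List V, IsPath E root v p
  acyclic : ∀ u v : V, (u, v) ∈ E → ¬ ∃ p : List V, IsPath E v u p

/-- A confluence from `i` to `j`: two distinct directed paths from `i` to `j`
that are vertex-disjoint except at their shared endpoints. -/
def IsConfluence {V : Type*} (E : Finset (V × V)) (i j : V) (p₁ p₂ : List V) : Prop :=
  i ≠ j ∧ p₁ ≠ p₂ ∧ IsPath E i j p₁ ∧ IsPath E i j p₂ ∧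
    ∀ v, v ∈ p₁ → v ∈ p₂ → v = i ∨ v = j

/-- The edge `e` is labeled with `j` iff some confluence with target `j` contains `e`. -/
def IsLabeled {V : Type*} (E : Finset (V × V)) (e : V × V) (j : V) : Prop :=
  ∃ i p₁ p₂, IsConfluence E i j p₁ p₂ ∧ (e ∈ pathEdges p₁ ∨ e ∈ pathEdges p₂)

/-- The edge `e` lies on some directed path from `i` to `j`. -/
def OnPath {V : Type*} (E : Finset (V × V)) (i j : V) (e : V × V) : Prop :=
  ∃ p, IsPath E i j p ∧ e ∈ pathEdges p

/-- The label set of an edge. -/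
def labelSet {V : Type*} (E : Finset (V × V)) (e : V × V) : Set V :=
  {j | IsLabeled E e j}

/-- Two edges lie in the same edge bag (of the common tail `e.1`) iff they are linked by a
chain of outgoing edges of `e.1` with pairwise intersecting label sets. -/
def inSameBag {V : Type*} (E : Finset (V × V)) (e e' : V × V) : Prop :=
  Relation.ReflTransGen
    (fun a b => a ∈ E ∧ b ∈ E ∧ a.1 = e.1 ∧ b.1 = e.1 ∧
      (labelSet E a ∩ labelSet E b).Nonempty) e e'

/-- The union of the label sets of the edges in the bag of `e`. -/
def bagLabels {V : Type*} (E : Finset (V × V)) (e : V × V) : Set V :=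
  {j | ∃ e', inSameBag E e e' ∧ IsLabeled E e' j}

/-- The width of an extraction order: one plus the maximal number of labels in any edge bag. -/
noncomputable def widthX {V : Type*} (X : ExtractionOrder V) : ℕ :=
  1 + X.E.sup (fun e => (bagLabels X.E e).ncard)

/-- `EX` is obtained from `E` by possibly reversing the orientation of some edges. -/
def IsOrientationOf {V : Type*} (EX E : Finset (V × V)) : Prop :=
  (∀ u v : V, (u, v) ∈ EX → (u, v) ∈ E ∨ (v, u) ∈ E) ∧
  (∀ u v : V, (u, v) ∈ E → (u, v) ∈ EX ∨ (v, u) ∈ EX)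

/-- The extraction width of a directed graph: the minimum width over all its extraction orders. -/
noncomputable def extractionWidth {V : Type*} (E : Finset (V × V)) : ℕ :=
  sInf {w | ∃ X : ExtractionOrder V, IsOrientationOf X.E E ∧ widthX X = w}

/-- The underlying undirected simple graph of a directed edge set. -/
def underlying {V : Type*} (E : Finset (V × V)) : SimpleGraph V where
  Adj u v := u ≠ v ∧ ((u, v) ∈ E ∨ (v, u) ∈ E)
  symm := ⟨by intro u v h; exact ⟨h.1.symm, h.2.elim Or.inr Or.inl⟩⟩
  loopless := ⟨by intro u h; exact h.1 rfl⟩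

section helpers

variable {V : Type*}

@[simp] lemma pathEdges_nil : pathEdges ([] : List V) = [] := rfl
@[simp] lemma pathEdges_single (x : V) : pathEdges [x] = [] := rfl
@[simp] lemma pathEdges_cons_cons (x y : V) (t : List V) :
    pathEdges (x :: y :: t) = (x, y) :: pathEdges (y :: t) := rfl

lemma pathEdges_append (u : List V) (a : V) (v : List V) :
    pathEdges (u ++ a :: v) = pathEdges (u ++ [a]) ++ pathEdges (a :: v) := by
  induction u with
  | nil => simp
  | cons x u ih =>
    cases u with
    | nil => simp
    | cons z u' => simpa using ih

lemma mem_pathEdges_iff {p : List V} {e : V × V} :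
    e ∈ pathEdges p ↔ ∃ s t, p = s ++ e.1 :: e.2 :: t := by
  constructor
  · intro h
    induction p with
    | nil => simp at h
    | cons x xs ih =>
      cases xs with
      | nil => simp at h
      | cons y t =>
        rw [pathEdges_cons_cons, List.mem_cons] at h
        rcases h with h | h
        · exact ⟨[], t, by simp [h]⟩
        · obtain ⟨s, t', hst⟩ := ih h
          exact ⟨x :: s, t', by simp [hst]⟩
  · rintro ⟨s, t, rfl⟩
    rw [pathEdges_append]
    simp

lemma pathEdges_infix {p q : List V} (h : p <:+: q) {e : V × V}
    (he : e ∈ pathEdges p) : e ∈ pathEdges q := by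
  obtain ⟨u, v, rfl⟩ := h
  obtain ⟨s, t, rfl⟩ := mem_pathEdges_iff.1 he
  exact mem_pathEdges_iff.2 ⟨u ++ s, t ++ v, by simp⟩

lemma mem_pathEdges_append {xs ys : List V} {c d : V}
    (hx : xs.getLast? = some c) (hy : ys.head? = some d) :
    (c, d) ∈ pathEdges (xs ++ ys) := by
  have hxne : xs ≠ [] := by rintro rfl; simp at hx
  have hyne : ys ≠ [] := by rintro rfl; simp at hy
  have h1 : xs = xs.dropLast ++ [c] := by
    have := List.dropLast_append_getLast hxne
    rw [List.getLast?_eq_getLast hxne, Option.some_inj] at hx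
    rw [hx] at this
    exact this.symm
  have h2 : ys = d :: ys.tail := by
    have := List.cons_head_tail hyne
    rw [List.head?_eq_head hyne, Option.some_inj] at hy
    rw [hy] at this
    exact this.symm
  refine mem_pathEdges_iff.2 ⟨xs.dropLast, ys.tail, ?_⟩
  conv_lhs => rw [h1, h2]
  simp

lemma isPath_infix {E : Finset (V × V)} {x y x' y' : V} {p q : List V}
    (h : IsPath E x y q) (hinf : p <:+: q) (hne : p ≠ [])
    (hh : p.head? = some x') (hl : p.getLast? = some y') : IsPath E x' y' p :=
  ⟨hne, hh, hl, h.2.2.2.1.sublist hinf.sublist,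
    fun e he => h.2.2.2.2 e (pathEdges_infix hinf he)⟩

lemma isPath_split {E : Finset (V × V)} {x y a : V} {u v : List V}
    (h : IsPath E x y (u ++ a :: v)) :
    IsPath E x a (u ++ [a]) ∧ IsPath E a y (a :: v) := by
  have hinf1 : (u ++ [a]) <:+: (u ++ a :: v) := ⟨[], v, by simp⟩
  have hinf2 : (a :: v) <:+: (u ++ a :: v) := ⟨u, [], by simp⟩
  refine ⟨isPath_infix h hinf1 (by simp) ?_ (by simp [List.getLast?_concat]),
          isPath_infix h hinf2 (by simp) (by simp) ?_⟩
  · cases u with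
    | nil =>
      have := h.2.1
      simp at this
      simp [this]
    | cons z u' =>
      rw [← h.2.1]
      simp
  · rw [← h.2.2.1, List.getLast?_append_of_ne_nil _ (by simp)]

lemma exists_first_mem {l : List V} {P : V → Prop} (h : ∃ x ∈ l, P x) :
    ∃ u a w, l = u ++ a :: w ∧ P a ∧ ∀ v ∈ u, ¬ P v := by
  classical
  induction l with
  | nil => simp at h
  | cons x xs ih =>
    by_cases hx : P x
    · exact ⟨[], x, xs, by simp, hx, by simp⟩
    · obtain ⟨y, hy, hPy⟩ := h
      rcases List.mem_cons.1 hy with rfl | hy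
      · exact absurd hPy hx
      · obtain ⟨u, a, w, rfl, hPa, hu⟩ := ih ⟨y, hy, hPy⟩
        exact ⟨x :: u, a, w, by simp, hPa, by
          intro v hv
          rcases List.mem_cons.1 hv with rfl | hv
          · exact hx
          · exact hu v hv⟩

lemma exists_last_mem {l : List V} {P : V → Prop} (h : ∃ x ∈ l, P x) :
    ∃ u a w, l = u ++ a :: w ∧ P a ∧ ∀ v ∈ w, ¬ P v := by
  obtain ⟨x, hx, hPx⟩ := h
  obtain ⟨u, a, w, hrev, hPa, hu⟩ :=
    exists_first_mem (l := l.reverse) ⟨x, by simpa using hx, hPx⟩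
  refine ⟨w.reverse, a, u.reverse, ?_, hPa, by simpa using hu⟩
  have : l.reverse.reverse = (u ++ a :: w).reverse := by rw [hrev]
  simpa using this

lemma isPath_join {E : Finset (V × V)} {x m y : V} {p q : List V}
    (hp : IsPath E x m p) (hq : IsPath E m y q)
    (hdisj : ∀ v ∈ p, v ∈ q → v = m) :
    IsPath E x y (p ++ q.tail) ∧
      pathEdges (p ++ q.tail) = pathEdges p ++ pathEdges q := by
  obtain ⟨hpne, hph, hpl, hpnd, hpE⟩ := hp
  obtain ⟨hqne, hqh, hql, hqnd, hqE⟩ := hq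
  have hq' : q = m :: q.tail := by
    have := List.cons_head_tail hqne
    rw [List.head?_eq_head hqne, Option.some_inj] at hqh
    rw [hqh] at this; exact this.symm
  have hp' : p = p.dropLast ++ [m] := by
    have := List.dropLast_append_getLast hpne
    rw [List.getLast?_eq_getLast hpne, Option.some_inj] at hpl
    rw [hpl] at this; exact this.symm
  have hkey : p ++ q.tail = p.dropLast ++ m :: q.tail := by
    conv_lhs => rw [hp']
    simp
  have hmnt : m ∉ q.tail := by
    intro hm
    have : q.Nodup := hqnd
    rw [hq'] at this
    exact (List.nodup_cons.1 this).1 hm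
  have hedges : pathEdges (p ++ q.tail) = pathEdges p ++ pathEdges q := by
    rw [hkey, pathEdges_append]
    conv_rhs => rw [hp', hq']
  refine ⟨⟨by simp [hpne], ?_, ?_, ?_, ?_⟩, hedges⟩
  · rw [List.head?_append_of_ne_nil _ hpne]; exact hph
  · rcases eq_or_ne q.tail [] with ht | ht
    · rw [ht, List.append_nil, hpl]
      rw [hq', ht] at hql
      simpa using hql
    · rw [List.getLast?_append_of_ne_nil _ ht, ← hql, hq']
      show q.tail.getLast? = ([m] ++ q.tail).getLast?
      rw [List.getLast?_append_of_ne_nil _ ht]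
  · rw [List.nodup_append]
    refine ⟨hpnd, hqnd.sublist (by rw [hq']; exact List.sublist_cons_self _ _), ?_⟩
    intro v hv v' hv' hvv'
    subst hvv'
    have := hdisj v hv (by rw [hq']; exact List.mem_cons_of_mem _ hv')
    subst this
    exact hmnt hv'
  · intro e he
    rw [hedges] at he
    rcases List.mem_append.1 he with h | h
    · exact hpE e h
    · exact hqE e h

lemma IsPath.head_mem {E : Finset (V × V)} {a b : V} {p : List V}
    (h : IsPath E a b p) : a ∈ p :=
  List.mem_of_mem_head? (by rw [h.2.1]; rfl)

lemma IsPath.getLast_mem {E : Finset (V × V)} {a b : V} {p : List V}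
    (h : IsPath E a b p) : b ∈ p :=
  List.mem_of_mem_getLast? (by rw [h.2.2.1]; rfl)

end helpers

section main
variable {V : Type*}

lemma IsConfluence.symm {E : Finset (V × V)} {i j : V} {p₁ p₂ : List V}
    (h : IsConfluence E i j p₁ p₂) : IsConfluence E i j p₂ p₁ :=
  ⟨h.1, h.2.1.symm, h.2.2.2.1, h.2.2.1, fun v h2 h1 => h.2.2.2.2 v h1 h2⟩

lemma master {E : Finset (V × V)}
    (acyc : ∀ u v : V, (u, v) ∈ E → ¬ ∃ p : List V, IsPath E v u p)
    {i j a b : V} {p₁ p₂ mid : List V} {e : V × V}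
    (hC : IsConfluence E i j p₁ p₂)
    (hmid : IsPath E a b mid)
    (hint : ∀ v ∈ mid, v ≠ a → v ≠ b → v ∉ p₁ ∧ v ∉ p₂)
    (hemid : e ∈ pathEdges mid)
    (hne₁ : e ∉ pathEdges p₁) (hne₂ : e ∉ pathEdges p₂)
    (hb1 : b ∈ p₁) (hbi : b ≠ i) (hab : a ≠ b) (haj : a ≠ j)
    (hap : a ∈ p₁ ∨ a ∈ p₂) :
    IsLabeled E e j := by
  obtain ⟨hij, -, hp₁, hp₂, hd⟩ := hC
  have heE : e ∈ E := hmid.2.2.2.2 e hemid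
  -- split p₁ at b
  obtain ⟨r, s₁, hp₁eq⟩ := List.append_of_mem hb1
  have hsplit := isPath_split (hp₁eq ▸ hp₁)
  have hnd₁ : (r ++ b :: s₁).Nodup := hp₁eq ▸ hp₁.2.2.2.1
  have hbr : b ∉ r := fun h => (List.disjoint_of_nodup_append hnd₁) h (List.mem_cons_self)
  have hdisjr : ∀ v ∈ r, v ∈ b :: s₁ → False :=
    fun v hv hv' => (List.disjoint_of_nodup_append hnd₁) hv hv'
  have hmidnd : mid.Nodup := hmid.2.2.2.1
  have hbj2 : ∀ v, v ∈ p₂ → v ∈ b :: s₁ → v = j := by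
    intro v hv2 hv1
    have hv1' : v ∈ p₁ := hp₁eq ▸ (List.mem_append_right r hv1)
    rcases hd v hv1' hv2 with hvi | hvj
    · -- v = i : i cannot be in b :: s₁
      exfalso
      rw [hvi] at hv1
      rcases eq_or_ne r ([] : List V) with rfl | hrne
      · simp at hp₁eq
        have : b = i := by
          have := hp₁.2.1
          rw [hp₁eq] at this
          simpa using this
        exact hbi this
      · have hir : i ∈ r := by
          have := hp₁.2.1
          rw [hp₁eq, List.head?_append_of_ne_nil _ hrne] at this
          exact List.mem_of_mem_head? (by rw [this]; rfl)
        exact hdisjr i hir hv1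
    · exact hvj
  by_cases hapost : a ∈ b :: s₁
  · -- a strictly after b on p₁ : build a cycle, contradiction with acyclicity
    exfalso
    have has₁ : a ∈ s₁ := by
      rcases List.mem_cons.1 hapost with rfl | h
      · exact absurd rfl hab
      · exact h
    obtain ⟨s₁', s₁'', hs₁eq⟩ := List.append_of_mem has₁
    -- path from b to a along p₁
    have hBsplit := isPath_split (u := b :: s₁') (v := s₁'')
      (show IsPath E b j ((b :: s₁') ++ a :: s₁'') by
        rw [hs₁eq] at hsplit
        exact hsplit.2)
    have hB : IsPath E b a ((b :: s₁') ++ [a]) := hBsplit.1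
    -- decompose mid at e
    obtain ⟨s, t, hmid_eq⟩ := mem_pathEdges_iff.1 hemid
    have hM := isPath_split (u := s) (v := e.2 :: t) (hmid_eq ▸ hmid)
    have hM2 : IsPath E a e.1 (s ++ [e.1]) := hM.1
    have hM1 : IsPath E e.2 b (e.2 :: t) := (isPath_split (u := [e.1]) (v := t) hM.2).2
    have hmid_eq2 : mid = (s ++ [e.1]) ++ (e.2 :: t) := by rw [hmid_eq]; simp
    have hmiddisj : ∀ v ∈ s ++ [e.1], v ∈ e.2 :: t → False := by
      intro v hv hv'
      exact (List.disjoint_of_nodup_append (hmid_eq2 ▸ hmidnd)) hv hv'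
    have hamem : a ∈ s ++ [e.1] := hM2.head_mem
    have hbmem : b ∈ e.2 :: t := hM1.getLast_mem
    -- join : e.2 → b → a
    have hJ1 := isPath_join hM1 hB (by
      intro v hv hv'
      have hvmid : v ∈ mid := hmid_eq2 ▸ List.mem_append_right _ hv
      have hvp₁ : v ∈ p₁ := by
        rw [hp₁eq]
        refine List.mem_append_right r ?_
        rw [hs₁eq]
        rcases List.mem_append.1 hv' with h | h
        · rcases List.mem_cons.1 h with rfl | h
          · exact List.mem_cons_self
          · exact List.mem_cons_of_mem _ (List.mem_append_left _ h)
        · simp at h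
          subst h
          exact List.mem_cons_of_mem _ (List.mem_append_right _ (List.mem_cons_self))
      rcases eq_or_ne v a with rfl | hva
      · exact absurd hv (fun hv => hmiddisj v hamem hv)
      · rcases eq_or_ne v b with rfl | hvb
        · rfl
        · exact absurd hvp₁ (hint v hvmid hva hvb).1)
    have hJ2 := isPath_join hJ1.1 hM2 (by
      intro v hv hv'
      rcases List.mem_append.1 hv with h | h
      · exact absurd h (fun h => hmiddisj v hv' h)
      · have hvb' : v ∈ (b :: s₁') ++ [a] := List.mem_of_mem_tail h
        have hvp₁ : v ∈ p₁ := by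
          rw [hp₁eq]
          refine List.mem_append_right r ?_
          rw [hs₁eq]
          rcases List.mem_append.1 hvb' with h' | h'
          · rcases List.mem_cons.1 h' with rfl | h'
            · exact List.mem_cons_self
            · exact List.mem_cons_of_mem _ (List.mem_append_left _ h')
          · simp at h'
            subst h'
            exact List.mem_cons_of_mem _ (List.mem_append_right _ (List.mem_cons_self))
        have hvmid : v ∈ mid := hmid_eq2 ▸ List.mem_append_left _ hv'
        rcases eq_or_ne v a with rfl | hva
        · rfl
        · rcases eq_or_ne v b with rfl | hvb
          · exact absurd hv' (fun hv' => hmiddisj v hv' hbmem)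
          · exact absurd hvp₁ (hint v hvmid hva hvb).1)
    exact acyc e.1 e.2 (by rwa [Prod.mk.eta]) ⟨_, hJ2.1⟩
  · by_cases hap2 : a ∈ p₂
    · -- confluence from a to j : mid ++ s₁ versus the part of p₂ after a
      obtain ⟨u₂, v₂, hp₂eq⟩ := List.append_of_mem hap2
      have hP : IsPath E a j (a :: v₂) := (isPath_split (hp₂eq ▸ hp₂)).2
      have hQ := isPath_join hmid hsplit.2 (by
        intro v hv hv'
        rcases eq_or_ne v a with rfl | hva
        · exact absurd hv' hapost
        · rcases eq_or_ne v b with rfl | hvb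
          · rfl
          · exact absurd (hp₁eq ▸ List.mem_append_right r hv') (hint v hv hva hvb).1)
      have heQ : e ∈ pathEdges (mid ++ (b :: s₁).tail) := by
        rw [hQ.2]; exact List.mem_append_left _ hemid
      have heP : e ∉ pathEdges (a :: v₂) := by
        intro h
        exact hne₂ (pathEdges_infix (q := p₂) (by rw [hp₂eq]; exact ⟨u₂, [], by simp⟩) h)
      refine ⟨a, mid ++ (b :: s₁).tail, a :: v₂,
        ⟨haj, fun h => heP (h ▸ heQ), hQ.1, hP, ?_⟩, Or.inl heQ⟩
      intro v hv hv'
      have hvp₂ : v ∈ p₂ := by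
        rw [hp₂eq]
        exact List.mem_append_right u₂ hv'
      rcases List.mem_append.1 hv with h | h
      · rcases eq_or_ne v a with rfl | hva
        · exact Or.inl rfl
        · rcases eq_or_ne v b with rfl | hvb
          · exact Or.inr (hbj2 v hvp₂ (List.mem_cons_self))
          · exact absurd hvp₂ (hint v h hva hvb).2
      · -- v ∈ s₁
        have h' : v ∈ b :: s₁ := List.mem_of_mem_tail h
        exact Or.inr (hbj2 v hvp₂ h')
    · -- a ∈ p₁, before b : confluence from i to j
      have hap1 : a ∈ p₁ := hap.resolve_right hap2
      have har : a ∈ r := by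
        rw [hp₁eq] at hap1
        rcases List.mem_append.1 hap1 with h | h
        · exact h
        · exact absurd h hapost
      obtain ⟨r₁, r₂, hreq⟩ := List.append_of_mem har
      have hp₁' : IsPath E i j (r₁ ++ a :: (r₂ ++ b :: s₁)) := by
        have : r₁ ++ a :: (r₂ ++ b :: s₁) = p₁ := by
          rw [hp₁eq, hreq]; simp
        rw [this]; exact hp₁
      have hA : IsPath E i a (r₁ ++ [a]) := (isPath_split hp₁').1
      have hsubr : ∀ v ∈ r₁ ++ [a], v ∈ r := by
        intro v hv
        rw [hreq]
        rcases List.mem_append.1 hv with h | h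
        · exact List.mem_append_left _ h
        · simp at h
          subst h
          exact List.mem_append_right _ (List.mem_cons_self)
      have hAM := isPath_join hA hmid (by
        intro v hv hv'
        have hvp₁ : v ∈ p₁ := hp₁eq ▸ List.mem_append_left _ (hsubr v hv)
        rcases eq_or_ne v a with rfl | hva
        · rfl
        · rcases eq_or_ne v b with rfl | hvb
          · exact absurd (hsubr v hv) hbr
          · exact absurd hvp₁ (hint v hv' hva hvb).1)
      have hQ := isPath_join hAM.1 hsplit.2 (by
        intro v hv hv'
        rcases List.mem_append.1 hv with h | h
        · exact absurd hv' (fun hv' => hdisjr v (hsubr v h) hv')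
        · have hvmid : v ∈ mid := List.mem_of_mem_tail h
          rcases eq_or_ne v a with rfl | hva
          · exact absurd hv' hapost
          · rcases eq_or_ne v b with rfl | hvb
            · rfl
            · exact absurd (hp₁eq ▸ List.mem_append_right r hv') (hint v hvmid hva hvb).1)
      have heQ : e ∈ pathEdges ((r₁ ++ [a]) ++ mid.tail ++ (b :: s₁).tail) := by
        rw [hQ.2, hAM.2]
        exact List.mem_append_left _ (List.mem_append_right _ hemid)
      refine ⟨i, (r₁ ++ [a]) ++ mid.tail ++ (b :: s₁).tail, p₂,
        ⟨hij, fun h => hne₂ (h ▸ heQ), hQ.1, hp₂, ?_⟩, Or.inl heQ⟩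
      intro v hv hv'
      rcases List.mem_append.1 hv with h | h
      · rcases List.mem_append.1 h with h' | h'
        · have hvp₁ : v ∈ p₁ := hp₁eq ▸ List.mem_append_left _ (hsubr v h')
          exact hd v hvp₁ hv'
        · have hvmid : v ∈ mid := List.mem_of_mem_tail h'
          rcases eq_or_ne v a with rfl | hva
          · exact absurd hv' hap2
          · rcases eq_or_ne v b with rfl | hvb
            · exact Or.inr (hbj2 v hv' (List.mem_cons_self))
            · exact absurd hv' (hint v hvmid hva hvb).2
      · have h' : v ∈ b :: s₁ := List.mem_of_mem_tail h
        have hvp₁ : v ∈ p₁ := hp₁eq ▸ List.mem_append_right r h'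
        exact hd v hvp₁ hv'

end main

theorem stmt14' {V : Type*} (E : Finset (V × V))
    (acyc : ∀ u v : V, (u, v) ∈ E → ¬ ∃ p : List V, IsPath E v u p)
    (i j : V) (p₁ p₂ : List V)
    (hC : IsConfluence E i j p₁ p₂) (e : V × V)
    (hne₁ : e ∉ pathEdges p₁) (hne₂ : e ∉ pathEdges p₂)
    (hon : OnPath E i j e) :
    IsLabeled E e j := by
  obtain ⟨q, hq, heq⟩ := hon
  obtain ⟨s, t, hqeq⟩ := mem_pathEdges_iff.1 heq
  have hqnd := hq.2.2.2.1
  have hqeq' : q = (s ++ [e.1]) ++ (e.2 :: t) := by rw [hqeq]; simp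
  have hipre : (s ++ [e.1]).head? = some i := by
    have h0 := hq.2.1
    rw [hqeq', List.head?_append_of_ne_nil (s ++ [e.1]) (l₂ := e.2 :: t) (by simp)] at h0
    exact h0
  have hjsuf : (e.2 :: t).getLast? = some j := by
    rw [← hq.2.2.1, hqeq', List.getLast?_append_of_ne_nil _ (by simp)]
  have hi1 : i ∈ p₁ := hC.2.2.1.head_mem
  have hj1 : j ∈ p₁ := hC.2.2.1.getLast_mem
  obtain ⟨u, a, w, hpreeq, hamem, hw⟩ := exists_last_mem (l := s ++ [e.1])
    (P := fun v => v ∈ p₁ ∨ v ∈ p₂)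
    ⟨i, List.mem_of_mem_head? (by rw [hipre]; rfl), Or.inl hi1⟩
  obtain ⟨w', b, t', hsufeq, hbmem, hw'⟩ := exists_first_mem (l := e.2 :: t)
    (P := fun v => v ∈ p₁ ∨ v ∈ p₂)
    ⟨j, List.mem_of_mem_getLast? (by rw [hjsuf]; rfl), Or.inl hj1⟩
  set mid := (a :: w) ++ (w' ++ [b]) with hmiddef
  have hqeq'' : q = u ++ mid ++ t' := by
    rw [hqeq', hpreeq, hsufeq, hmiddef]; simp
  have hmidlast : mid.getLast? = some b := by
    rw [show mid = ((a :: w) ++ w') ++ [b] by rw [hmiddef]; simp]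
    exact List.getLast?_concat
  have hmid : IsPath E a b mid :=
    isPath_infix hq ⟨u, t', hqeq''.symm⟩ (by rw [hmiddef]; simp)
      (by rw [hmiddef]; simp) hmidlast
  have hdisjps : ∀ v ∈ s ++ [e.1], v ∈ e.2 :: t → False := by
    intro v hv hv'
    exact List.disjoint_of_nodup_append (hqeq' ▸ hqnd) hv hv'
  have hapre : a ∈ s ++ [e.1] := by
    rw [hpreeq]; exact List.mem_append_right u (List.mem_cons_self)
  have hbsuf : b ∈ e.2 :: t := by
    rw [hsufeq]; exact List.mem_append_right w' (List.mem_cons_self)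
  have hjsufmem : j ∈ e.2 :: t := List.mem_of_mem_getLast? (by rw [hjsuf]; rfl)
  have hipremem : i ∈ s ++ [e.1] := List.mem_of_mem_head? (by rw [hipre]; rfl)
  have hab : a ≠ b := fun h => hdisjps a hapre (h ▸ hbsuf)
  have haj : a ≠ j := fun h => hdisjps a hapre (h ▸ hjsufmem)
  have hbi : b ≠ i := fun h => hdisjps i hipremem (h ▸ hbsuf)
  have hint : ∀ v ∈ mid, v ≠ a → v ≠ b → v ∉ p₁ ∧ v ∉ p₂ := by
    intro v hv hva hvb
    have hvw : v ∈ w ∨ v ∈ w' := by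
      rw [hmiddef] at hv
      rcases List.mem_append.1 hv with h | h
      · rcases List.mem_cons.1 h with rfl | h
        · exact absurd rfl hva
        · exact Or.inl h
      · rcases List.mem_append.1 h with h | h
        · exact Or.inr h
        · simp at h
          exact absurd h hvb
    rcases hvw with h | h
    · have := hw v h
      exact ⟨fun h1 => this (Or.inl h1), fun h2 => this (Or.inr h2)⟩
    · have := hw' v h
      exact ⟨fun h1 => this (Or.inl h1), fun h2 => this (Or.inr h2)⟩
  have hemid : e ∈ pathEdges mid := by
    have hgl : (a :: w).getLast? = some e.1 := by
      have h0 : (u ++ (a :: w)).getLast? = some e.1 := by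
        rw [← hpreeq]; exact List.getLast?_concat
      rwa [List.getLast?_append_of_ne_nil _ (by simp)] at h0
    have hhd : (w' ++ [b]).head? = some e.2 := by
      have h0 : (w' ++ (b :: t')).head? = some e.2 := by rw [← hsufeq]; rfl
      cases w' with
      | nil => simpa using h0
      | cons x xs => simpa using h0
    have := mem_pathEdges_append hgl hhd
    rwa [Prod.mk.eta] at this
  rcases hbmem with hb1 | hb2
  · exact master acyc hC hmid hint hemid hne₁ hne₂ hb1 hbi hab haj hamem
  · exact master acyc hC.symm hmid (fun v hv h1 h2 => (hint v hv h1 h2).symm)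
      hemid hne₂ hne₁ hb2 hbi hab haj hamem.symm

/-- If `e` does not lie on either path of a given confluence from `i` to `j`,
but lies on some directed path from `i` to `j`, then some confluence with target `j`
contains `e`. -/
theorem stmt14 {V : Type*} (X : ExtractionOrder V) (i j : V) (p₁ p₂ : List V)
    (hC : IsConfluence X.E i j p₁ p₂) (e : V × V) (he : e ∈ X.E)
    (hne₁ : e ∉ pathEdges p₁) (hne₂ : e ∉ pathEdges p₂)
    (hon : OnPath X.E i j e) :
    IsLabeled X.E e j :=
  stmt14' X.E X.acyclic i j p₁ p₂ hC e hne₁ hne₂ hon
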